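/- Let t ↦ Q(t) be a C¹ positive function on [0,T] satisfying the differential equation Q'(t) = Q(t)(Q(t) - 4). If Q(T) ≥ 4 + η for some η > 0, then Q(t) ≥ 4 + 4η e^{-4T}/(4 + η - η e^{-4T}) for all t ∈ [0,T]. -/

import Mathlib

open Real

/-- The initial time layer lemma: if `Q' = Q (Q - 4)` on `[0,T]`, `Q > 0`, and
`Q(T) ≥ 4 + η` with `η > 0`, then
`Q(t) ≥ 4 + 4η e^{-4T}/(4 + η - η e^{-4T})` for all `t ∈ [0,T]`. -/
theorem initial_time_layer (T η : ℝ) (hT : 0 ≤ T) (hη : 0 < η)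
    (Q : ℝ → ℝ) (hpos : ∀ t ∈ Set.Icc (0 : ℝ) T, 0 < Q t)
    (hode : ∀ t ∈ Set.Icc (0 : ℝ) T, HasDerivAt Q (Q t * (Q t - 4)) t)
    (hQT : Q T ≥ 4 + η) :
    ∀ t ∈ Set.Icc (0 : ℝ) T,
      Q t ≥ 4 + 4 * η * Real.exp (-4 * T) / (4 + η - η * Real.exp (-4 * T)) := by
  set φ : ℝ → ℝ := fun s => (1 - 4 * (Q s)⁻¹) * Real.exp (-4 * s) with hφ
  have hderiv : ∀ s ∈ Set.Icc (0 : ℝ) T, HasDerivAt φ 0 s := by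
    intro s hs
    have hQ := hpos s hs
    have h1 : HasDerivAt (fun s => 1 - 4 * (Q s)⁻¹)
        (-(4 * (-(Q s * (Q s - 4)) / Q s ^ 2))) s :=
      (((hode s hs).inv hQ.ne').const_mul 4).const_sub 1
    have h2 : HasDerivAt (fun s => Real.exp (-4 * s)) (Real.exp (-4 * s) * (-4)) s := by
      simpa using ((hasDerivAt_id s).const_mul (-4)).exp
    have h := h1.mul h2
    refine h.congr_deriv ?_
    have hE := Real.exp_pos (-4 * s)
    field_simp
    ring
  have hconst : ∀ s ∈ Set.Icc (0 : ℝ) T, φ s = φ 0 := by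
    apply constant_of_has_deriv_right_zero
    · intro s hs
      exact ((hderiv s hs).continuousAt).continuousWithinAt
    · intro s hs
      exact ((hderiv s (Set.mem_Icc_of_Ico hs)).hasDerivWithinAt)
  intro t ht
  have hTmem : T ∈ Set.Icc (0 : ℝ) T := ⟨hT, le_refl T⟩
  have key : φ t = φ T := by rw [hconst t ht, hconst T hTmem]
  have hqt : 0 < Q t := hpos t ht
  have hqT : 0 < Q T := hpos T hTmem
  set a := Real.exp (-4 * t) with hA
  set b := Real.exp (-4 * T) with hB
  have ha : 0 < a := Real.exp_pos _
  have hb : 0 < b := Real.exp_pos _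
  have ha1 : a ≤ 1 := Real.exp_le_one_iff.mpr (by nlinarith [ht.1])
  have hb1 : b ≤ 1 := Real.exp_le_one_iff.mpr (by nlinarith)
  have key2 : (Q t - 4) * Q T * a = (Q T - 4) * Q t * b := by
    have : (1 - 4 * (Q t)⁻¹) * a = (1 - 4 * (Q T)⁻¹) * b := key
    field_simp at this
    nlinarith [this]
  have hqT4 : 4 + η ≤ Q T := hQT
  have hqt4 : 4 < Q t := by
    nlinarith [mul_pos (mul_pos (show (0:ℝ) < Q T - 4 by linarith) hqt) hb,
      mul_pos hqT ha]
  have hD : 0 < 4 + η - η * b := by nlinarith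
  have hmain : 4 * η * b ≤ (Q t - 4) * (4 + η - η * b) := by
    have h3 : (Q t - 4) * Q T ≥ (Q T - 4) * Q t * b := by
      nlinarith [mul_pos (show (0:ℝ) < Q t - 4 by linarith) hqT]
    nlinarith [mul_nonneg (mul_nonneg (le_of_lt hqt) (le_of_lt hb))
        (show (0:ℝ) ≤ Q T - 4 - η by linarith),
      mul_nonneg (mul_nonneg (le_of_lt hqt) (le_of_lt hb)) (le_of_lt hη)]
  have : 4 * η * b / (4 + η - η * b) ≤ Q t - 4 := by
    rw [div_le_iff₀ hD]
    linarith
  linarith
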